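/- The ten even theta constants of genus 2 have no common zero on the Siegel upper half-space H₂; equivalently, for every Z ∈ H₂ there exists an even characteristic m with θ[m](Z) ≠ 0. -/

import Mathlib

open Matrix

/-- The genus-2 Siegel upper half-space. -/
def SiegelH2 : Set (Matrix (Fin 2) (Fin 2) ℂ) :=
  {Z | Z.IsSymm ∧ (Z.map Complex.im).PosDef}

/-- The genus-2 theta nullwert with characteristic `m = (a,b)`. -/
noncomputable def thetaNull (a b : Fin 2 → ℤ) (Z : Matrix (Fin 2) (Fin 2) ℂ) : ℂ :=
  ∑' g : Fin 2 → ℤ,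
    Complex.exp ((Real.pi : ℂ) * Complex.I *
      ((fun i => (g i : ℂ) + (a i : ℂ) / 2) ⬝ᵥ
          Z *ᵥ (fun i => (g i : ℂ) + (a i : ℂ) / 2) +
        (fun i => (g i : ℂ) + (a i : ℂ) / 2) ⬝ᵥ (fun i => (b i : ℂ))))

set_option maxHeartbeats 1000000

noncomputable section
open Complex Filter

/-- sign (-1)^n for n : ℤ -/
def sgn (n : ℤ) : ℂ := if n % 2 = 0 then 1 else -1

lemma sgn_add (m n : ℤ) : sgn (m + n) = sgn m * sgn n := by
  rcases Int.emod_two_eq m with h1 | h1 <;> rcases Int.emod_two_eq n with h2 | h2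
  · have h3 : (m + n) % 2 = 0 := by omega
    simp [sgn, h1, h2, h3]
  · have h3 : (m + n) % 2 = 1 := by omega
    simp [sgn, h1, h2, h3]
  · have h3 : (m + n) % 2 = 1 := by omega
    simp [sgn, h1, h2, h3]
  · have h3 : (m + n) % 2 = 0 := by omega
    simp [sgn, h1, h2, h3]

lemma sgn_two_mul_add (k n : ℤ) : sgn (2 * k + n) = sgn n := by
  rcases Int.emod_two_eq n with h | h <;>
    · have h3 : (2*k + n) % 2 = n % 2 := by omega
      simp [sgn, h3]

lemma sgn_two_mul (k : ℤ) : sgn (2 * k) = 1 := by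
  have := sgn_two_mul_add k 0
  rw [add_zero] at this
  rw [this]; simp [sgn]

lemma sgn_zero : sgn 0 = 1 := by simp [sgn]

lemma exp_pi_I_int (n : ℤ) : Complex.exp ((Real.pi : ℂ) * Complex.I * n) = sgn n := by
  have h : (Real.pi : ℂ) * Complex.I * n = (n : ℂ) * ((Real.pi : ℂ) * Complex.I) := by ring
  rw [h, Complex.exp_int_mul, Complex.exp_pi_mul_I]
  rcases Int.even_or_odd n with ⟨k, hk⟩ | ⟨k, hk⟩
  · subst hk
    rw [show k + k = 2 * k by ring, show ((-1:ℂ)) ^ (2*k) = ((-1:ℂ)^(2:ℤ))^k from _root_.zpow_mul _ 2 k]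
    have h3 : (2 * k) % 2 = 0 := by omega
    norm_num [sgn, h3]
  · subst hk
    rw [show ((-1:ℂ)) ^ (2*k+1) = ((-1:ℂ)^(2:ℤ))^k * (-1:ℂ)^(1:ℤ) by
      rw [zpow_add₀ (by norm_num : (-1:ℂ) ≠ 0), _root_.zpow_mul]]
    have h3 : (2*k+1) % 2 = 1 := by omega
    norm_num [sgn, h3]
def Qf (A B C D x y : ℂ) : ℂ := x * (A * x + B * y) + y * (C * x + D * y)

/-- general theta series term -/
def trm (A B C D : ℂ) (a0 a1 b0 b1 : ℤ) (p : ℤ × ℤ) : ℂ :=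
  Complex.exp ((Real.pi : ℂ) * Complex.I *
    (Qf A B C D ((p.1 : ℂ) + (a0 : ℂ) / 2) ((p.2 : ℂ) + (a1 : ℂ) / 2) +
      (((p.1 : ℂ) + (a0 : ℂ) / 2) * (b0 : ℂ) + ((p.2 : ℂ) + (a1 : ℂ) / 2) * (b1 : ℂ))))

/-- theta series as a sum over ℤ × ℤ -/
def Sθ (A B C D : ℂ) (a0 a1 b0 b1 : ℤ) : ℂ := ∑' p : ℤ × ℤ, trm A B C D a0 a1 b0 b1 p

/-- imaginary part quadratic form -/
def Qr (A B C D : ℂ) (x y : ℝ) : ℝ := x * (A.im * x + B.im * y) + y * (C.im * x + D.im * y)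

lemma norm_trm (A B C D : ℂ) (a0 a1 b0 b1 : ℤ) (p : ℤ × ℤ) :
    ‖trm A B C D a0 a1 b0 b1 p‖ =
      Real.exp (-(Real.pi * Qr A B C D ((p.1 : ℝ) + (a0 : ℝ)/2) ((p.2 : ℝ) + (a1 : ℝ)/2))) := by
  have hx : ((p.1 : ℂ) + (a0 : ℂ) / 2) = ((((p.1 : ℝ) + (a0 : ℝ)/2 : ℝ)) : ℂ) := by push_cast; ring
  have hy : ((p.2 : ℂ) + (a1 : ℂ) / 2) = ((((p.2 : ℝ) + (a1 : ℝ)/2 : ℝ)) : ℂ) := by push_cast; ring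
  have hb0 : ((b0 : ℤ) : ℂ) = (((b0 : ℝ)) : ℂ) := by push_cast; ring
  have hb1 : ((b1 : ℤ) : ℂ) = (((b1 : ℝ)) : ℂ) := by push_cast; ring
  rw [trm, hx, hy, hb0, hb1, Complex.norm_exp]
  congr 1
  set x := ((p.1 : ℝ) + (a0 : ℝ)/2 : ℝ)
  set y := ((p.2 : ℝ) + (a1 : ℝ)/2 : ℝ)
  simp [Qf, Qr, Complex.mul_re, Complex.mul_im, Complex.add_re, Complex.add_im,
    Complex.ofReal_re, Complex.ofReal_im, Complex.I_re, Complex.I_im]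

/-- positivity of the imaginary quadratic form -/
def Pos (A B C D : ℂ) : Prop := ∃ l : ℝ, 0 < l ∧ ∀ x y : ℝ, l * (x^2 + y^2) ≤ Qr A B C D x y

lemma Pos.mul {A B C D : ℂ} (r : ℝ) (hr : 0 < r) (h : Pos A B C D) :
    Pos ((r : ℂ) * A) ((r : ℂ) * B) ((r : ℂ) * C) ((r : ℂ) * D) := by
  obtain ⟨l, hl, hq⟩ := h
  refine ⟨r * l, by positivity, fun x y => ?_⟩
  have hQ : Qr ((r : ℂ) * A) ((r : ℂ) * B) ((r : ℂ) * C) ((r : ℂ) * D) x y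
      = r * Qr A B C D x y := by
    simp [Qr, Complex.mul_im, Complex.ofReal_re, Complex.ofReal_im]
    ring
  rw [hQ]
  have := hq x y
  nlinarith

lemma qr_mul {A B C D : ℂ} (r : ℝ) (x y : ℝ) :
    Qr ((r : ℂ) * A) ((r : ℂ) * B) ((r : ℂ) * C) ((r : ℂ) * D) x y = r * Qr A B C D x y := by
  simp [Qr, Complex.mul_im, Complex.ofReal_re, Complex.ofReal_im]
  ring

lemma qr_nonneg {A B C D : ℂ} (h : Pos A B C D) (x y : ℝ) : 0 ≤ Qr A B C D x y := by
  obtain ⟨l, hl, hq⟩ := h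
  have := hq x y
  nlinarith

/-- the SiegelH2 condition gives Pos -/
lemma pos_of_mem {Z : Matrix (Fin 2) (Fin 2) ℂ} (hZ : (Z.map Complex.im).PosDef) :
    Pos (Z 0 0) (Z 0 1) (Z 1 0) (Z 1 1) := by
  set f : ℝ × ℝ → ℝ := fun v => Qr (Z 0 0) (Z 0 1) (Z 1 0) (Z 1 1) v.1 v.2 with hf
  have hcont : Continuous f := by
    simp only [hf, Qr]
    fun_prop
  have hpos : ∀ v : ℝ × ℝ, v ≠ 0 → 0 < f v := by
    intro v hv
    have hx : (![v.1, v.2] : Fin 2 → ℝ) ≠ 0 := by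
      intro hcon
      apply hv
      have h1 := congrFun hcon 0
      have h2 := congrFun hcon 1
      simp at h1 h2
      exact Prod.ext h1 h2
    have := hZ.dotProduct_mulVec_pos hx
    simp only [star_trivial] at this
    convert this using 1
    · rfl
    simp [hf, Qr, dotProduct, Matrix.mulVec, Fin.sum_univ_two, Matrix.map_apply]
  obtain ⟨v0, hv0S, hmin⟩ := (isCompact_sphere (0 : ℝ × ℝ) 1).exists_isMinOn
    (NormedSpace.sphere_nonempty.mpr zero_le_one) hcont.continuousOn
  have hv0 : v0 ≠ 0 := by
    intro hcon
    rw [mem_sphere_zero_iff_norm] at hv0S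
    simp [hcon] at hv0S
  set l := f v0 with hldef
  have hl : 0 < l := hpos v0 hv0
  refine ⟨l / 2, by positivity, fun x y => ?_⟩
  rcases eq_or_ne (x, y) 0 with h0 | h0
  · have hx : x = 0 := by simpa using congrArg Prod.fst h0
    have hy : y = 0 := by simpa using congrArg Prod.snd h0
    simp [hx, hy, Qr]
  · set c := ‖(x, y)‖ with hc
    have hcpos : 0 < c := by
      rw [hc]
      exact norm_pos_iff.mpr h0
    have hu : (c⁻¹ • (x, y)) ∈ Metric.sphere (0 : ℝ × ℝ) 1 := by
      rw [mem_sphere_zero_iff_norm, norm_smul, Real.norm_eq_abs,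
        abs_of_pos (inv_pos.mpr hcpos), ← hc]
      field_simp
    have hmin' := hmin hu
    -- f (x,y) = c^2 * f (c⁻¹ • (x,y))
    have hscale : f (x, y) = c^2 * f (c⁻¹ • (x, y)) := by
      have h1 : (c⁻¹ • (x, y) : ℝ × ℝ).1 = c⁻¹ * x := rfl
      have h2 : (c⁻¹ • (x, y) : ℝ × ℝ).2 = c⁻¹ * y := rfl
      simp only [hf, Qr, h1, h2]
      field_simp
    have hbound : x^2 + y^2 ≤ 2 * c^2 := by
      have h1 : |x| ≤ c := by
        rw [hc, Prod.norm_def]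
        simpa using le_max_left ‖x‖ ‖y‖
      have h2 : |y| ≤ c := by
        rw [hc, Prod.norm_def]
        simpa using le_max_right ‖x‖ ‖y‖
      nlinarith [abs_nonneg x, abs_nonneg y, _root_.sq_abs x, _root_.sq_abs y]
    have : l ≤ f (c⁻¹ • (x, y)) := hmin'
    have hfv : l * c^2 ≤ f (x, y) := by
      rw [hscale]
      nlinarith
    have : f (x, y) = Qr (Z 0 0) (Z 0 1) (Z 1 0) (Z 1 1) x y := rfl
    nlinarith

/-- summability of Gaussian over ℤ -/
lemma summable_int_gauss (c : ℝ) (hc : 0 < c) :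
    Summable (fun n : ℤ => Real.exp (-(c * (n : ℝ)^2))) := by
  have hlt : Real.exp (-c) < 1 := by
    have h0 := Real.exp_lt_exp.mpr (show -c < (0:ℝ) by linarith)
    simpa using h0
  have hnat : Summable (fun n : ℕ => Real.exp (-(c * (n : ℝ)^2))) := by
    apply Summable.of_nonneg_of_le (fun n => (Real.exp_pos _).le) (fun n => ?_)
      (summable_geometric_of_lt_one (Real.exp_pos (-c)).le hlt)
    rw [← Real.exp_nat_mul]
    apply Real.exp_le_exp.mpr
    have h1 : (n : ℝ) ≤ (n : ℝ)^2 := by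
      have := Nat.le_self_pow (two_ne_zero) n
      exact_mod_cast this
    nlinarith
  apply Summable.of_nat_of_neg hnat
  have h2 : ∀ n : ℕ, Real.exp (-(c * ((-(n:ℤ) : ℤ) : ℝ)^2)) = Real.exp (-(c * (n : ℝ)^2)) := by
    intro n; push_cast; ring_nf
  simpa [h2] using hnat

lemma summable_norm_trm {A B C D : ℂ} (h : Pos A B C D) (a0 a1 b0 b1 : ℤ) :
    Summable (fun p : ℤ × ℤ => ‖trm A B C D a0 a1 b0 b1 p‖) := by
  obtain ⟨l, hl, hq⟩ := h
  have hπ := Real.pi_pos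
  have hπl : (0:ℝ) ≤ Real.pi * l := by positivity
  set α := ((a0 : ℝ)/2 : ℝ) with hα
  set β := ((a1 : ℝ)/2 : ℝ) with hβ
  set c := (Real.pi * l / 2 : ℝ) with hcdef
  have hcpos : 0 < c := by rw [hcdef]; positivity
  set K := Real.exp (Real.pi * l * (α^2 + β^2)) with hK
  have key : ∀ p : ℤ × ℤ, ‖trm A B C D a0 a1 b0 b1 p‖ ≤
      K * (Real.exp (-(c * (p.1 : ℝ)^2)) * Real.exp (-(c * (p.2 : ℝ)^2))) := by
    intro p
    rw [norm_trm, hK, ← Real.exp_add, ← Real.exp_add]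
    apply Real.exp_le_exp.mpr
    set X := ((p.1 : ℝ) + α : ℝ) with hX
    set Y := ((p.2 : ℝ) + β : ℝ) with hY
    have hq1 : Real.pi * (l * (X^2 + Y^2)) ≤ Real.pi * Qr A B C D X Y :=
      mul_le_mul_of_nonneg_left (hq X Y) hπ.le
    have e1 : (Real.pi * l) * ((p.1 : ℝ)^2/2 - α^2) ≤ (Real.pi * l) * X^2 := by
      apply mul_le_mul_of_nonneg_left _ hπl
      nlinarith [sq_nonneg ((p.1:ℝ) + 2*α)]
    have e2 : (Real.pi * l) * ((p.2 : ℝ)^2/2 - β^2) ≤ (Real.pi * l) * Y^2 := by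
      apply mul_le_mul_of_nonneg_left _ hπl
      nlinarith [sq_nonneg ((p.2:ℝ) + 2*β)]
    clear_value X Y α β c K
    rw [hcdef]
    linarith
  apply Summable.of_nonneg_of_le (fun p => norm_nonneg _) key
  exact ((summable_int_gauss c hcpos).mul_of_nonneg (summable_int_gauss c hcpos)
    (fun n => (Real.exp_pos _).le) (fun n => (Real.exp_pos _).le)).mul_left K

lemma summable_trm {A B C D : ℂ} (h : Pos A B C D) (a0 a1 b0 b1 : ℤ) :
    Summable (fun p : ℤ × ℤ => trm A B C D a0 a1 b0 b1 p) :=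
  (summable_norm_trm h a0 a1 b0 b1).of_norm

lemma trm_b_factor (A B C D : ℂ) (b0 b1 : ℤ) (p : ℤ × ℤ) :
    trm A B C D 0 0 b0 b1 p = trm A B C D 0 0 0 0 p * sgn (p.1 * b0 + p.2 * b1) := by
  rw [trm, trm, ← exp_pi_I_int, ← Complex.exp_add]
  congr 1
  push_cast
  ring

lemma L2 {A B C D : ℂ} (h : Pos A B C D) (τ0 τ1 : ℤ) :
    Sθ A B C D 0 0 0 0 + sgn τ1 * Sθ A B C D 0 0 0 1 + sgn τ0 * Sθ A B C D 0 0 1 0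
      + sgn (τ0 + τ1) * Sθ A B C D 0 0 1 1
    = 4 * Sθ (4*A) (4*B) (4*C) (4*D) τ0 τ1 0 0 := by
  set W : ℤ × ℤ → ℂ :=
    fun p => trm A B C D 0 0 0 0 p * ((1 + sgn (τ0 + p.1)) * (1 + sgn (τ1 + p.2))) with hW
  have hsum : ∀ b0 b1 : ℤ, Summable (fun p => trm A B C D 0 0 b0 b1 p) :=
    fun b0 b1 => summable_trm h 0 0 b0 b1
  have h1 : Sθ A B C D 0 0 0 0 + sgn τ1 * Sθ A B C D 0 0 0 1 + sgn τ0 * Sθ A B C D 0 0 1 0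
      + sgn (τ0 + τ1) * Sθ A B C D 0 0 1 1 = ∑' p, W p := by
    have A1 : Summable (fun p => trm A B C D 0 0 0 0 p + sgn τ1 * trm A B C D 0 0 0 1 p) :=
      (hsum 0 0).add ((hsum 0 1).mul_left _)
    have A2 : Summable (fun p => (trm A B C D 0 0 0 0 p + sgn τ1 * trm A B C D 0 0 0 1 p)
        + sgn τ0 * trm A B C D 0 0 1 0 p) := A1.add ((hsum 1 0).mul_left _)
    rw [Sθ, Sθ, Sθ, Sθ, ← tsum_mul_left, ← tsum_mul_left, ← tsum_mul_left,
      ← Summable.tsum_add (hsum 0 0) ((hsum 0 1).mul_left _),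
      ← Summable.tsum_add A1 ((hsum 1 0).mul_left _),
      ← Summable.tsum_add A2 ((hsum 1 1).mul_left _)]
    apply tsum_congr
    intro p
    rw [trm_b_factor A B C D 0 1 p, trm_b_factor A B C D 1 0 p, trm_b_factor A B C D 1 1 p, hW]
    simp only [mul_one, mul_zero, zero_add, add_zero, one_mul]
    rw [sgn_add τ0 p.1, sgn_add τ1 p.2, sgn_add τ0 τ1, sgn_add p.1 p.2]
    ring
  have hinj : Function.Injective (fun q : ℤ × ℤ => ((2*q.1+τ0, 2*q.2+τ1) : ℤ × ℤ)) := by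
    intro q r hqr
    rw [Prod.ext_iff] at hqr ⊢
    simp only at hqr
    omega
  have hsupp : Function.support W ⊆
      Set.range (fun q : ℤ × ℤ => ((2*q.1+τ0, 2*q.2+τ1) : ℤ × ℤ)) := by
    intro p hp
    by_contra hray
    apply hp
    have hcond : ¬((τ0 + p.1) % 2 = 0 ∧ (τ1 + p.2) % 2 = 0) := by
      rintro ⟨hA, hB⟩
      exact hray ⟨((p.1 - τ0)/2, (p.2 - τ1)/2), by
        rw [Prod.ext_iff]; constructor <;> simp <;> omega⟩
    rcases not_and_or.mp hcond with hA | hA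
    · have hs : sgn (τ0 + p.1) = -1 := by
        rcases Int.emod_two_eq (τ0 + p.1) with hh | hh
        · exact absurd hh hA
        · simp [sgn, hh]
      simp [hW, hs]
    · have hs : sgn (τ1 + p.2) = -1 := by
        rcases Int.emod_two_eq (τ1 + p.2) with hh | hh
        · exact absurd hh hA
        · simp [sgn, hh]
      simp [hW, hs]
  have key : ∀ q : ℤ × ℤ, W ((2*q.1+τ0, 2*q.2+τ1) : ℤ × ℤ)
      = 4 * trm (4*A) (4*B) (4*C) (4*D) τ0 τ1 0 0 q := by
    intro q
    have s1 : sgn (τ0 + (2*q.1+τ0)) = 1 := by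
      rw [show τ0 + (2*q.1+τ0) = 2*(τ0+q.1) by ring, sgn_two_mul]
    have s2 : sgn (τ1 + (2*q.2+τ1)) = 1 := by
      rw [show τ1 + (2*q.2+τ1) = 2*(τ1+q.2) by ring, sgn_two_mul]
    have et : trm A B C D 0 0 0 0 ((2*q.1+τ0, 2*q.2+τ1) : ℤ × ℤ)
        = trm (4*A) (4*B) (4*C) (4*D) τ0 τ1 0 0 q := by
      rw [trm, trm]
      congr 1
      simp only [Qf]
      push_cast
      ring
    rw [hW]
    simp only [s1, s2, et]
    ring
  rw [h1, ← hinj.tsum_eq hsupp, tsum_congr key, Sθ, tsum_mul_left]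

lemma Lsq_piece {A B C D : ℂ} (h : Pos A B C D) (c0 c1 a0 a1 : ℤ)
    (ha0 : a0 = 0 ∨ a0 = 1) (ha1 : a1 = 0 ∨ a1 = 1) :
    (∑' r : (ℤ × ℤ) × (ℤ × ℤ), if (r.1.1 + r.2.1) % 2 = a0 ∧ (r.1.2 + r.2.2) % 2 = a1
        then trm A B C D 0 0 c0 c1 r.1 * trm A B C D 0 0 c0 c1 r.2 else 0)
    = sgn (a0*c0 + a1*c1) * (Sθ (2*A) (2*B) (2*C) (2*D) a0 a1 0 0)^2 := by
  have h2 : Pos (2*A) (2*B) (2*C) (2*D) := by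
    have := h.mul 2 two_pos
    simpa using this
  set ι : (ℤ × ℤ) × (ℤ × ℤ) → (ℤ × ℤ) × (ℤ × ℤ) :=
    fun z => ((z.1.1 + z.2.1 + a0, z.1.2 + z.2.2 + a1), (z.1.1 - z.2.1, z.1.2 - z.2.2)) with hι
  set F : (ℤ × ℤ) × (ℤ × ℤ) → ℂ :=
    fun r => if (r.1.1 + r.2.1) % 2 = a0 ∧ (r.1.2 + r.2.2) % 2 = a1
        then trm A B C D 0 0 c0 c1 r.1 * trm A B C D 0 0 c0 c1 r.2 else 0 with hF
  have hinj : Function.Injective ι := by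
    intro z w hzw
    rw [hι] at hzw
    simp only [Prod.ext_iff] at hzw ⊢
    omega
  have hsupp : Function.support F ⊆ Set.range ι := by
    intro r hr
    rw [Function.mem_support] at hr
    have hcond : (r.1.1 + r.2.1) % 2 = a0 ∧ (r.1.2 + r.2.2) % 2 = a1 := by
      by_contra hc
      exact hr (by rw [hF]; simp only [if_neg hc])
    refine ⟨(((r.1.1 + r.2.1 - a0)/2, (r.1.2 + r.2.2 - a1)/2),
            ((r.1.1 - r.2.1 - a0)/2, (r.1.2 - r.2.2 - a1)/2)), ?_⟩
    rw [hι]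
    simp only [Prod.ext_iff]
    obtain ⟨hc1, hc2⟩ := hcond
    refine ⟨⟨?_, ?_⟩, ?_, ?_⟩ <;> omega
  have key : ∀ z : (ℤ × ℤ) × (ℤ × ℤ), F (ι z)
      = sgn (a0*c0 + a1*c1) * (trm (2*A) (2*B) (2*C) (2*D) a0 a1 0 0 z.1
          * trm (2*A) (2*B) (2*C) (2*D) a0 a1 0 0 z.2) := by
    intro z
    have hcond : ((ι z).1.1 + (ι z).2.1) % 2 = a0 ∧ ((ι z).1.2 + (ι z).2.2) % 2 = a1 := by
      rw [hι]
      simp only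
      omega
    rw [hF]
    simp only [if_pos hcond]
    have hsgn : sgn (a0*c0 + a1*c1)
        = Complex.exp ((Real.pi : ℂ) * Complex.I *
            ((2*(z.1.1*c0 + z.1.2*c1) + (a0*c0 + a1*c1) : ℤ) : ℂ)) := by
      rw [exp_pi_I_int, sgn_two_mul_add]
    rw [hsgn]
    simp only [trm]
    rw [← Complex.exp_add, ← Complex.exp_add, ← Complex.exp_add]
    congr 1
    simp only [Qf, hι]
    push_cast
    ring
  rw [← hinj.tsum_eq hsupp, tsum_congr key, tsum_mul_left, Sθ, sq,
    tsum_mul_tsum_of_summable_norm (summable_norm_trm h2 a0 a1 0 0) (summable_norm_trm h2 a0 a1 0 0)]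

lemma Lsq {A B C D : ℂ} (h : Pos A B C D) (c0 c1 : ℤ) :
    (Sθ A B C D 0 0 c0 c1)^2
      = (Sθ (2*A) (2*B) (2*C) (2*D) 0 0 0 0)^2
        + sgn c0 * (Sθ (2*A) (2*B) (2*C) (2*D) 1 0 0 0)^2
        + sgn c1 * (Sθ (2*A) (2*B) (2*C) (2*D) 0 1 0 0)^2
        + sgn (c0 + c1) * (Sθ (2*A) (2*B) (2*C) (2*D) 1 1 0 0)^2 := by
  set G : (ℤ × ℤ) × (ℤ × ℤ) → ℂ :=
    fun r => trm A B C D 0 0 c0 c1 r.1 * trm A B C D 0 0 c0 c1 r.2 with hG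
  set Fc : ℤ → ℤ → (ℤ × ℤ) × (ℤ × ℤ) → ℂ :=
    fun a0 a1 r => if (r.1.1 + r.2.1) % 2 = a0 ∧ (r.1.2 + r.2.2) % 2 = a1 then G r else 0 with hFc
  have hnormG : Summable (fun r : (ℤ × ℤ) × (ℤ × ℤ) => ‖G r‖) := by
    have := (summable_norm_trm h 0 0 c0 c1).mul_of_nonneg (summable_norm_trm h 0 0 c0 c1)
      (fun p => norm_nonneg _) (fun p => norm_nonneg _)
    simpa [hG, norm_mul] using this
  have hsumF : ∀ a0 a1 : ℤ, Summable (Fc a0 a1) := by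
    intro a0 a1
    apply Summable.of_norm_bounded hnormG
    intro r
    rw [hFc]
    by_cases hcase : (r.1.1 + r.2.1) % 2 = a0 ∧ (r.1.2 + r.2.2) % 2 = a1
    · simp [hcase]
    · simp [hcase]
  have split : ∀ r, G r = Fc 0 0 r + Fc 0 1 r + Fc 1 0 r + Fc 1 1 r := by
    intro r
    rcases Int.emod_two_eq (r.1.1 + r.2.1) with h1 | h1 <;>
      rcases Int.emod_two_eq (r.1.2 + r.2.2) with h2 | h2 <;>
      norm_num [hFc, h1, h2]
  have hLHS : (Sθ A B C D 0 0 c0 c1)^2 = ∑' r, G r := by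
    rw [Sθ, sq, tsum_mul_tsum_of_summable_norm (summable_norm_trm h 0 0 c0 c1)
      (summable_norm_trm h 0 0 c0 c1)]
  have e1 : ∑' r, (Fc 0 0 r + Fc 0 1 r + Fc 1 0 r + Fc 1 1 r)
      = (∑' r, Fc 0 0 r) + (∑' r, Fc 0 1 r) + (∑' r, Fc 1 0 r) + (∑' r, Fc 1 1 r) := by
    rw [Summable.tsum_add (((hsumF 0 0).add (hsumF 0 1)).add (hsumF 1 0)) (hsumF 1 1),
      Summable.tsum_add ((hsumF 0 0).add (hsumF 0 1)) (hsumF 1 0),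
      Summable.tsum_add (hsumF 0 0) (hsumF 0 1)]
  have p00 := Lsq_piece h c0 c1 0 0 (Or.inl rfl) (Or.inl rfl)
  have p01 := Lsq_piece h c0 c1 0 1 (Or.inl rfl) (Or.inr rfl)
  have p10 := Lsq_piece h c0 c1 1 0 (Or.inr rfl) (Or.inl rfl)
  have p11 := Lsq_piece h c0 c1 1 1 (Or.inr rfl) (Or.inr rfl)
  rw [hLHS, tsum_congr split, e1]
  simp only [hFc, hG]
  rw [p00, p01, p10, p11]
  simp only [zero_mul, one_mul, add_zero, zero_add, sgn_zero]
  ring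

lemma thetaNull_eq (a b : Fin 2 → ℤ) (Z : Matrix (Fin 2) (Fin 2) ℂ) :
    thetaNull a b Z = Sθ (Z 0 0) (Z 0 1) (Z 1 0) (Z 1 1) (a 0) (a 1) (b 0) (b 1) := by
  rw [thetaNull, Sθ, ← Equiv.tsum_eq ((piFinTwoEquiv fun _ => ℤ).symm)]
  apply tsum_congr
  intro p
  rw [trm]
  congr 1
  simp [dotProduct, Matrix.mulVec, Fin.sum_univ_two, piFinTwoEquiv, Qf]

lemma trm_zero (A B C D : ℂ) : trm A B C D 0 0 0 0 (0 : ℤ × ℤ) = 1 := by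
  rw [trm]
  norm_num [Qf]

lemma norm_trm00 (A B C D : ℂ) (p : ℤ × ℤ) :
    ‖trm A B C D 0 0 0 0 p‖ = Real.exp (-(Real.pi * Qr A B C D (p.1 : ℝ) (p.2 : ℝ))) := by
  rw [norm_trm]
  norm_num

lemma stepQ {A B C D : ℂ} (h : Pos A B C D)
    (H : ∀ c0 c1 : ℤ, (c0 = 0 ∨ c0 = 1) → (c1 = 0 ∨ c1 = 1) → Sθ A B C D 0 0 c0 c1 = 0) :
    ∀ c0 c1 : ℤ, (c0 = 0 ∨ c0 = 1) → (c1 = 0 ∨ c1 = 1) →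
      Sθ (2*A) (2*B) (2*C) (2*D) 0 0 c0 c1 = 0 := by
  have h2 : Pos (2*A) (2*B) (2*C) (2*D) := by
    have := h.mul 2 two_pos
    simpa using this
  have hP4 : ∀ τ0 τ1 : ℤ, Sθ (4*A) (4*B) (4*C) (4*D) τ0 τ1 0 0 = 0 := by
    intro τ0 τ1
    have hL := L2 h τ0 τ1
    rw [H 0 0 (Or.inl rfl) (Or.inl rfl), H 0 1 (Or.inl rfl) (Or.inr rfl),
      H 1 0 (Or.inr rfl) (Or.inl rfl), H 1 1 (Or.inr rfl) (Or.inr rfl)] at hL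
    simp only [mul_zero, add_zero, zero_add] at hL
    have h4 : (4:ℂ) ≠ 0 := by norm_num
    exact (mul_eq_zero.mp hL.symm).resolve_left h4
  intro c0 c1 hc0 hc1
  have hsq := Lsq h2 c0 c1
  rw [show (2:ℂ)*(2*A) = 4*A by ring, show (2:ℂ)*(2*B) = 4*B by ring,
    show (2:ℂ)*(2*C) = 4*C by ring, show (2:ℂ)*(2*D) = 4*D by ring,
    hP4 0 0, hP4 1 0, hP4 0 1, hP4 1 1] at hsq
  simp only [ne_eq, OfNat.ofNat_ne_zero, not_false_eq_true, zero_pow, mul_zero, add_zero,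
    zero_add] at hsq
  exact (pow_eq_zero_iff (two_ne_zero)).mp hsq

lemma tendsto_S {A B C D : ℂ} (h : Pos A B C D) :
    Filter.Tendsto (fun k : ℕ =>
      Sθ ((2:ℂ)^k * A) ((2:ℂ)^k * B) ((2:ℂ)^k * C) ((2:ℂ)^k * D) 0 0 0 0) atTop (nhds 1) := by
  obtain ⟨l, hl, hq⟩ := h
  have hP : Pos A B C D := ⟨l, hl, hq⟩
  have hcast : ((2:ℂ)) = (((2:ℝ)) : ℂ) := by norm_num
  have hnorm : ∀ (k : ℕ) (p : ℤ × ℤ),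
      ‖trm ((2:ℂ)^k * A) ((2:ℂ)^k * B) ((2:ℂ)^k * C) ((2:ℂ)^k * D) 0 0 0 0 p‖
        = Real.exp (-(Real.pi * ((2:ℝ)^k * Qr A B C D (p.1:ℝ) (p.2:ℝ)))) := by
    intro k p
    have hc2 : ((2:ℂ)^k) = ((((2:ℝ)^k : ℝ)) : ℂ) := by push_cast; ring
    rw [hc2, norm_trm00, qr_mul]
  have hsum : Summable (fun p : ℤ × ℤ => ‖trm A B C D 0 0 0 0 p‖) := summable_norm_trm hP 0 0 0 0
  have hbound : ∀ (k : ℕ) (p : ℤ × ℤ),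
      ‖trm ((2:ℂ)^k * A) ((2:ℂ)^k * B) ((2:ℂ)^k * C) ((2:ℂ)^k * D) 0 0 0 0 p‖
        ≤ ‖trm A B C D 0 0 0 0 p‖ := by
    intro k p
    rw [hnorm, norm_trm00]
    apply Real.exp_le_exp.mpr
    have hq0 : 0 ≤ Qr A B C D (p.1:ℝ) (p.2:ℝ) := qr_nonneg hP _ _
    have h1 : (1:ℝ) ≤ (2:ℝ)^k := one_le_pow₀ one_le_two
    nlinarith [mul_nonneg (mul_nonneg Real.pi_pos.le (sub_nonneg.mpr h1)) hq0]
  have hpt : ∀ p : ℤ × ℤ,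
      Filter.Tendsto (fun k : ℕ =>
        trm ((2:ℂ)^k * A) ((2:ℂ)^k * B) ((2:ℂ)^k * C) ((2:ℂ)^k * D) 0 0 0 0 p) atTop
        (nhds (if p = (0 : ℤ × ℤ) then (1:ℂ) else 0)) := by
    intro p
    by_cases hp : p = (0 : ℤ × ℤ)
    · subst hp
      simp only [if_pos]
      have hconst : (fun k : ℕ =>
          trm ((2:ℂ)^k * A) ((2:ℂ)^k * B) ((2:ℂ)^k * C) ((2:ℂ)^k * D) 0 0 0 0 (0 : ℤ × ℤ))
          = fun _ => (1:ℂ) := funext fun k => trm_zero _ _ _ _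
      rw [hconst]
      exact tendsto_const_nhds
    · simp only [if_neg hp]
      rw [tendsto_zero_iff_norm_tendsto_zero]
      set q : ℝ := Qr A B C D (p.1:ℝ) (p.2:ℝ) with hqdef
      have hqpos : 0 < q := by
        have hp' : ¬(p.1 = 0 ∧ p.2 = 0) := by
          intro hc
          exact hp (Prod.ext hc.1 hc.2)
        have hge := hq (p.1:ℝ) (p.2:ℝ)
        have hsq : 0 < ((p.1:ℝ)^2 + (p.2:ℝ)^2) := by
          rcases not_and_or.mp hp' with h1 | h1
          · have h2 : ((p.1:ℝ)) ≠ 0 := Int.cast_ne_zero.mpr h1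
            have h3 : 0 < (p.1:ℝ)^2 := by positivity
            nlinarith [sq_nonneg ((p.2:ℝ))]
          · have h2 : ((p.2:ℝ)) ≠ 0 := Int.cast_ne_zero.mpr h1
            have h3 : 0 < (p.2:ℝ)^2 := by positivity
            nlinarith [sq_nonneg ((p.1:ℝ))]
        nlinarith
      have heq : (fun k : ℕ =>
          ‖trm ((2:ℂ)^k * A) ((2:ℂ)^k * B) ((2:ℂ)^k * C) ((2:ℂ)^k * D) 0 0 0 0 p‖)
          = fun k : ℕ => Real.exp ((-(Real.pi * q)) * (2:ℝ)^k) := by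
        funext k
        rw [hnorm]
        congr 1
        ring
      rw [heq]
      have h2 : Filter.Tendsto (fun k : ℕ => (2:ℝ)^k) atTop atTop :=
        tendsto_pow_atTop_atTop_of_one_lt one_lt_two
      have h3 : Filter.Tendsto (fun k : ℕ => (-(Real.pi * q)) * (2:ℝ)^k) atTop atBot := by
        apply Filter.Tendsto.const_mul_atTop_of_neg _ h2
        nlinarith [Real.pi_pos]
      exact Real.tendsto_exp_atBot.comp h3
  have hmain := tendsto_tsum_of_dominated_convergence hsum hpt
    (Filter.Eventually.of_forall hbound)
  have htsum : (∑' p : ℤ × ℤ, (if p = (0 : ℤ × ℤ) then (1:ℂ) else 0)) = 1 := tsum_ite_eq _ _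
  rw [htsum] at hmain
  simpa only [Sθ] using hmain


/-- The ten even theta constants of genus 2 have no common zero on `H₂`:
for every `Z ∈ H₂` there is an even characteristic `m = (a,b)` with
`θ[m](Z) ≠ 0`. -/
theorem even_theta_constants_no_common_zero :
    ∀ Z ∈ SiegelH2, ∃ a b : Fin 2 → ℤ,
      (∀ i, a i = 0 ∨ a i = 1) ∧ (∀ i, b i = 0 ∨ b i = 1) ∧
        Even (∑ i, a i * b i) ∧ thetaNull a b Z ≠ 0 := by
  intro Z hZ
  obtain ⟨hsymm, hPD⟩ := hZ
  by_contra hcon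
  push_neg at hcon
  have hPos : Pos (Z 0 0) (Z 0 1) (Z 1 0) (Z 1 1) := pos_of_mem hPD
  have hPosPow : ∀ k : ℕ, Pos ((2:ℂ)^k * Z 0 0) ((2:ℂ)^k * Z 0 1)
      ((2:ℂ)^k * Z 1 0) ((2:ℂ)^k * Z 1 1) := by
    intro k
    have h1 := hPos.mul ((2:ℝ)^k) (by positivity)
    have h2 : ((((2:ℝ)^k : ℝ)) : ℂ) = (2:ℂ)^k := by push_cast; ring
    rwa [h2] at h1
  have base : ∀ c0 c1 : ℤ, (c0 = 0 ∨ c0 = 1) → (c1 = 0 ∨ c1 = 1) →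
      Sθ (Z 0 0) (Z 0 1) (Z 1 0) (Z 1 1) 0 0 c0 c1 = 0 := by
    intro c0 c1 hc0 hc1
    have h0 := hcon ![0, 0] ![c0, c1]
      (by intro i; fin_cases i <;> simp)
      (by intro i; fin_cases i <;> simp [hc0, hc1])
      (by simp [Fin.sum_univ_two])
    rw [thetaNull_eq] at h0
    simpa using h0
  have QQ : ∀ k : ℕ, ∀ c0 c1 : ℤ, (c0 = 0 ∨ c0 = 1) → (c1 = 0 ∨ c1 = 1) →
      Sθ ((2:ℂ)^k * Z 0 0) ((2:ℂ)^k * Z 0 1) ((2:ℂ)^k * Z 1 0) ((2:ℂ)^k * Z 1 1)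
        0 0 c0 c1 = 0 := by
    intro k
    induction k with
    | zero => simpa using base
    | succ n ih =>
      intro c0 c1 hc0 hc1
      have e : ∀ X : ℂ, (2:ℂ) * ((2:ℂ)^n * X) = (2:ℂ)^(n+1) * X := fun X => by ring
      rw [← e (Z 0 0), ← e (Z 0 1), ← e (Z 1 0), ← e (Z 1 1)]
      exact stepQ (hPosPow n) ih c0 c1 hc0 hc1
  have hzero : ∀ k : ℕ, Sθ ((2:ℂ)^k * Z 0 0) ((2:ℂ)^k * Z 0 1) ((2:ℂ)^k * Z 1 0)
      ((2:ℂ)^k * Z 1 1) 0 0 0 0 = 0 :=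
    fun k => QQ k 0 0 (Or.inl rfl) (Or.inl rfl)
  have hlim := tendsto_S hPos
  have hlim0 : Filter.Tendsto (fun k : ℕ =>
      Sθ ((2:ℂ)^k * Z 0 0) ((2:ℂ)^k * Z 0 1) ((2:ℂ)^k * Z 1 0) ((2:ℂ)^k * Z 1 1) 0 0 0 0)
      atTop (nhds 0) := by
    have : (fun k : ℕ =>
        Sθ ((2:ℂ)^k * Z 0 0) ((2:ℂ)^k * Z 0 1) ((2:ℂ)^k * Z 1 0) ((2:ℂ)^k * Z 1 1) 0 0 0 0)
        = fun _ => (0:ℂ) := funext hzero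
    rw [this]
    exact tendsto_const_nhds
  exact one_ne_zero (tendsto_nhds_unique hlim hlim0)


end
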